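/- For the Beta distribution with integer parameters S+1 and F+1, and any y ∈ (0,1), the CDF satisfies F^{Beta}_{S+1,F+1}(y) = 1 − F^{Binom}_{S+F+1,y}(S), where F^{Binom}_{n,p}(r) is the probability that a Binomial(n,p) random variable is at most r. -/

import Mathlib

open intervalIntegral

/-- The CDF of the Beta distribution with integer parameters `S+1`, `F+1`. -/
noncomputable def betaCdf (S F : ℕ) (y : ℝ) : ℝ :=
  (∫ x in (0:ℝ)..y, x ^ S * (1 - x) ^ F) / (∫ x in (0:ℝ)..(1:ℝ), x ^ S * (1 - x) ^ F)

/-- The CDF of the Binomial distribution with `n` trials and success probability `p`,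
evaluated at a real threshold `r`. -/
noncomputable def binomCdf (n : ℕ) (p r : ℝ) : ℝ :=
  ∑ j ∈ Finset.range (n + 1),
    if (j : ℝ) ≤ r then (n.choose j : ℝ) * p ^ j * (1 - p) ^ (n - j) else 0

private noncomputable def Gfun (S F : ℕ) (z : ℝ) : ℝ :=
  ∑ j ∈ Finset.Ico (S + 1) (S + F + 2), ((S + F + 1).choose j : ℝ) * z ^ j * (1 - z) ^ (S + F + 1 - j)

private lemma Gfun_deriv (S F : ℕ) (y : ℝ) :
    HasDerivAt (Gfun S F)
      (((S + F + 1).choose (S + 1) : ℝ) * (S + 1) * (y ^ S * (1 - y) ^ F)) y := by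
  have hG : Gfun S F = fun z : ℝ => ∑ j ∈ Finset.Ico (S + 1) (S + F + 1 + 1),
      ((S + F + 1).choose j : ℝ) * z ^ j * (1 - z) ^ (S + F + 1 - j) := rfl
  rw [hG]
  set n := S + F + 1 with hn
  set a : ℕ → ℝ := fun j => (n.choose j : ℝ) * j * y ^ (j - 1) * (1 - y) ^ (n - j) with ha
  have key : ∀ j ∈ Finset.Ico (S + 1) (n + 1),
      HasDerivAt (fun z : ℝ => (n.choose j : ℝ) * z ^ j * (1 - z) ^ (n - j))
        (a j - a (j + 1)) y := by
    intro j hj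
    have h1 : HasDerivAt (fun z : ℝ => z ^ j) ((j : ℝ) * y ^ (j - 1)) y := by
      simpa using hasDerivAt_pow j y
    have h2 : HasDerivAt (fun z : ℝ => (1 - z) ^ (n - j))
        (((n - j : ℕ) : ℝ) * (1 - y) ^ (n - j - 1) * (-1)) y :=
      ((hasDerivAt_id y).const_sub 1).pow _
    have hc : (n.choose (j + 1) : ℝ) * ((j : ℝ) + 1) = (n.choose j : ℝ) * ((n - j : ℕ) : ℝ) := by
      exact_mod_cast Nat.choose_succ_right_eq n j
    have h := (h1.const_mul ((n.choose j : ℝ))).fun_mul h2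
    convert h using 1
    case e'_4 => rfl
    case e'_5 => rfl
    have e1 : n - (j + 1) = n - j - 1 := by omega
    simp only [ha]
    rw [e1, Nat.add_sub_cancel]
    push_cast
    linear_combination (-(y ^ j * (1 - y) ^ (n - j - 1))) * hc
  have hsum := HasDerivAt.fun_sum key
  have htel : (∑ j ∈ Finset.Ico (S + 1) (n + 1), (a j - a (j + 1))) = a (S + 1) - a (n + 1) := by
    rw [Finset.sum_Ico_eq_sum_range]
    have h := Finset.sum_range_sub' (fun i => a (S + 1 + i)) ((n + 1) - (S + 1))
    have e2 : S + 1 + (n - S) = n + 1 := by omega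
    simpa [e2, Nat.add_assoc] using h
  have han1 : a (n + 1) = 0 := by simp [ha, Nat.choose_succ_self]
  have haS1 : a (S + 1) = ((n.choose (S + 1) : ℝ)) * ((S : ℝ) + 1) * (y ^ S * (1 - y) ^ F) := by
    have e3 : n - (S + 1) = F := by omega
    simp only [ha, e3, Nat.add_sub_cancel]
    push_cast
    ring
  have goal : ((n.choose (S + 1) : ℝ)) * ((S : ℝ) + 1) * (y ^ S * (1 - y) ^ F)
      = ∑ j ∈ Finset.Ico (S + 1) (n + 1), (a j - a (j + 1)) := by
    rw [htel, han1, haS1]; ring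
  rw [goal]
  exact hsum

private lemma Gfun_zero (S F : ℕ) : Gfun S F 0 = 0 := by
  unfold Gfun
  apply Finset.sum_eq_zero
  intro j hj
  rw [Finset.mem_Ico] at hj
  rw [zero_pow (by omega : j ≠ 0)]
  ring

private lemma Gfun_one (S F : ℕ) : Gfun S F 1 = 1 := by
  unfold Gfun
  rw [Finset.sum_eq_single_of_mem (S + F + 1) (by simp [Finset.mem_Ico])]
  · simp
  · intro j hj hne
    rw [Finset.mem_Ico] at hj
    rw [show (1 : ℝ) - 1 = 0 by ring, zero_pow (by omega : S + F + 1 - j ≠ 0)]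
    ring

private lemma integral_eq (S F : ℕ) (z : ℝ) :
    (∫ x in (0:ℝ)..z, x ^ S * (1 - x) ^ F)
      = Gfun S F z / (((S + F + 1).choose (S + 1) : ℝ) * ((S : ℝ) + 1)) := by
  set c : ℝ := ((S + F + 1).choose (S + 1) : ℝ) * ((S : ℝ) + 1) with hcdef
  have hcpos : 0 < c := by
    apply mul_pos
    · exact_mod_cast Nat.choose_pos (by omega : S + 1 ≤ S + F + 1)
    · positivity
  have hcont : Continuous fun x : ℝ => c * (x ^ S * (1 - x) ^ F) := by fun_prop
  have h := intervalIntegral.integral_eq_sub_of_hasDerivAt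
    (f := Gfun S F) (f' := fun x => c * (x ^ S * (1 - x) ^ F)) (a := 0) (b := z)
    (fun x _ => by simpa [hcdef] using Gfun_deriv S F x) (hcont.intervalIntegrable 0 z)
  rw [intervalIntegral.integral_const_mul, Gfun_zero, sub_zero] at h
  rw [eq_div_iff hcpos.ne']
  linarith [h]

theorem betaCdf_eq_one_sub_binomCdf (S F : ℕ) (y : ℝ) (hy : y ∈ Set.Ioo (0:ℝ) 1) :
    betaCdf S F y = 1 - binomCdf (S + F + 1) y S := by
  set c : ℝ := ((S + F + 1).choose (S + 1) : ℝ) * ((S : ℝ) + 1) with hcdef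
  have hcpos : 0 < c := by
    apply mul_pos
    · exact_mod_cast Nat.choose_pos (by omega : S + 1 ≤ S + F + 1)
    · positivity
  have hbeta : betaCdf S F y = Gfun S F y := by
    rw [betaCdf, integral_eq, integral_eq, Gfun_one]
    field_simp
    rw [mul_div_assoc, div_self (by exact_mod_cast (Nat.choose_pos (by omega : S + 1 ≤ S + F + 1)).ne'), mul_one]
  have hbin : binomCdf (S + F + 1) y S
      = ∑ j ∈ Finset.range (S + 1),
          ((S + F + 1).choose j : ℝ) * y ^ j * (1 - y) ^ (S + F + 1 - j) := by
    have hfil : Finset.filter (fun j : ℕ => (j : ℝ) ≤ (S : ℝ)) (Finset.range (S + F + 1 + 1))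
        = Finset.range (S + 1) := by
      ext j
      simp only [Finset.mem_filter, Finset.mem_range, Nat.cast_le]
      omega
    rw [binomCdf, ← Finset.sum_filter, hfil]
  have htotal : (∑ j ∈ Finset.range (S + F + 1 + 1),
      ((S + F + 1).choose j : ℝ) * y ^ j * (1 - y) ^ (S + F + 1 - j)) = 1 := by
    have h := add_pow y (1 - y) (S + F + 1)
    rw [show y + (1 - y) = 1 by ring, one_pow] at h
    conv_rhs => rw [h]
    apply Finset.sum_congr rfl
    intro j _
    ring
  have hsplit : (∑ j ∈ Finset.range (S + 1),
        ((S + F + 1).choose j : ℝ) * y ^ j * (1 - y) ^ (S + F + 1 - j))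
      + Gfun S F y
      = ∑ j ∈ Finset.range (S + F + 1 + 1),
          ((S + F + 1).choose j : ℝ) * y ^ j * (1 - y) ^ (S + F + 1 - j) := by
    rw [Gfun, Finset.range_eq_Ico, Finset.range_eq_Ico]
    exact Finset.sum_Ico_consecutive (fun j => ((S + F + 1).choose j : ℝ) * y ^ j * (1 - y) ^ (S + F + 1 - j)) (by omega : 0 ≤ S + 1) (by omega : S + 1 ≤ S + F + 2)
  rw [hbeta, hbin]
  rw [htotal] at hsplit
  linarith [hsplit]
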